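/- Let r ≥ 3, let t ≥ 3, and let (x_1,y_1), …, (x_t,y_t) be primitive solutions of 0 < |F(x,y)| ≤ h, pairwise distinct up to sign, all related to the same r-th root of unity ω, ordered so that ζ_1 ≥ ζ_2 ≥ … ≥ ζ_t. Assume that either (a) γ = conj(α) and δ = conj(β) (the case D < 0), or (b) u_i, v_i are nonzero and μ_i is real for every 1 ≤ i ≤ t (the case D > 0). If |j| > 2^{1+(r−2)/(r(R−1))}·h^{2/r}, where R = (r−1)^{t−2}, then ζ_{t−1} < 1/2. -/

import Mathlib

open Complex ComplexConjugate

noncomputable section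

/-- The linear form `αx + βy` evaluated at an integer pair. -/
def lin (α β : ℂ) (x y : ℤ) : ℂ := α * (x : ℂ) + β * (y : ℂ)

/-- The diagonalizable binary form `F(x,y) = (αx+βy)^r − (γx+δy)^r`. -/
def form (α β γ δ : ℂ) (r : ℕ) (x y : ℤ) : ℂ := lin α β x y ^ r - lin γ δ x y ^ r

/-- `Z(x,y) = max(|u|,|v|)`. -/
def Zmax (α β γ δ : ℂ) (x y : ℤ) : ℝ :=
  max ‖lin α β x y‖ ‖lin γ δ x y‖

/-- `ζ(x,y) = |F(x,y)| / Z(x,y)^r`. -/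
def zetaF (α β γ δ : ℂ) (r : ℕ) (x y : ℤ) : ℝ :=
  ‖form α β γ δ r x y‖ / Zmax α β γ δ x y ^ r

/-- `μ(x,y) = v^r / u^r`. -/
def muF (α β γ δ : ℂ) (r : ℕ) (x y : ℤ) : ℂ :=
  lin γ δ x y ^ r / lin α β x y ^ r

/-- `F` has integer coefficients: each coefficient
`binom(r,k)·(α^k β^{r−k} − γ^k δ^{r−k})` is a rational integer. -/
def IntCoeffs (α β γ δ : ℂ) (r : ℕ) : Prop :=
  ∀ k ≤ r, ∃ n : ℤ, (r.choose k : ℂ) * (α ^ k * β ^ (r - k) - γ ^ k * δ ^ (r - k)) = (n : ℂ)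

/-- `(x,y)` is a primitive solution of the Thue inequality `0 < |F(x,y)| ≤ h`. -/
def IsPrimSol (α β γ δ : ℂ) (r h : ℕ) (x y : ℤ) : Prop :=
  Int.gcd x y = 1 ∧ 0 < ‖form α β γ δ r x y‖ ∧
    ‖form α β γ δ r x y‖ ≤ (h : ℝ)

/-- The solution `(x,y)` is related to the `r`-th root of unity `ω`: the principal
argument of `(u/v)·ω⁻¹` lies in `(−π/r, π/r]`. -/
def RelatedTo (α β γ δ : ℂ) (r : ℕ) (ω : ℂ) (x y : ℤ) : Prop :=
  (lin α β x y / lin γ δ x y * ω⁻¹).arg ∈ Set.Ioc (-(Real.pi / r)) (Real.pi / r)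

lemma two_sin_mul_I (z : ℂ) :
    2 * Complex.sin z * I = Complex.exp (z * I) - Complex.exp (-z * I) := by
  rw [Complex.sin]
  linear_combination (Complex.exp (-z * I) - Complex.exp (z * I)) * Complex.I_sq

lemma exp_I_sub_exp_I (a b : ℝ) :
    Complex.exp (a * I) - Complex.exp (b * I)
      = Complex.exp ((((a + b) / 2 : ℝ) : ℂ) * I)
        * (2 * Complex.sin ((((a - b) / 2 : ℝ) : ℂ)) * I) := by
  rw [two_sin_mul_I, mul_sub, ← Complex.exp_add, ← Complex.exp_add]
  have h1 : (((a + b) / 2 : ℝ) : ℂ) * I + (((a - b) / 2 : ℝ) : ℂ) * I = (a : ℂ) * I := by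
    push_cast; ring
  have h2 : (((a + b) / 2 : ℝ) : ℂ) * I + -((((a - b) / 2 : ℝ) : ℂ)) * I = (b : ℂ) * I := by
    push_cast; ring
  rw [h1, h2]

lemma abs_exp_I_sub_exp_I (a b : ℝ) :
    ‖Complex.exp (a * I) - Complex.exp (b * I)‖
      = 2 * |Real.sin ((a - b) / 2)| := by
  rw [exp_I_sub_exp_I]
  rw [norm_mul, Complex.norm_exp_ofReal_mul_I, one_mul, norm_mul, norm_mul, Complex.norm_I,
    ← Complex.ofReal_sin, Complex.norm_real, Real.norm_eq_abs]
  norm_num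

lemma abs_exp_I_sub_one (a : ℝ) :
    ‖Complex.exp (a * I) - 1‖ = 2 * |Real.sin (a / 2)| := by
  have h := abs_exp_I_sub_exp_I a 0
  simp only [Complex.ofReal_zero, zero_mul, Complex.exp_zero, sub_zero] at h
  exact h

lemma chord_le (a b : ℝ) :
    ‖Complex.exp (a * I) - Complex.exp (b * I)‖ ≤ |a - b| := by
  rw [abs_exp_I_sub_exp_I]
  have h := Real.abs_sin_le_abs (x := (a - b) / 2)
  rw [_root_.abs_div, _root_.abs_two] at h
  linarith

lemma jordan_lower (a : ℝ) (ha : |a| ≤ Real.pi) :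
    2 / Real.pi * |a| ≤ ‖Complex.exp (a * I) - 1‖ := by
  rw [abs_exp_I_sub_one]
  have h2 : |a / 2| ≤ Real.pi / 2 := by
    rw [_root_.abs_div, _root_.abs_two]; linarith
  have h := Real.mul_abs_le_abs_sin h2
  rw [_root_.abs_div, _root_.abs_two] at h
  linarith

/-- primitive vectors with zero determinant are equal up to sign -/
lemma det_ne_zero_of_prim {x1 y1 x2 y2 : ℤ} (h1 : Int.gcd x1 y1 = 1) (h2 : Int.gcd x2 y2 = 1)
    (hne : ¬(x1 = x2 ∧ y1 = y2)) (hne' : ¬(x1 = -x2 ∧ y1 = -y2)) :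
    x1 * y2 - x2 * y1 ≠ 0 := by
  intro hd
  have hd' : x1 * y2 = x2 * y1 := by omega
  have c1 : IsCoprime x1 y1 := Int.isCoprime_iff_gcd_eq_one.2 h1
  have c2 : IsCoprime x2 y2 := Int.isCoprime_iff_gcd_eq_one.2 h2
  have dx : x1 ∣ x2 := by
    refine c1.dvd_of_dvd_mul_right ⟨y2, ?_⟩
    linear_combination -hd'
  have dx' : x2 ∣ x1 := by
    refine c2.dvd_of_dvd_mul_right ⟨y1, ?_⟩
    linear_combination hd'
  have dy : y1 ∣ y2 := by
    refine c1.symm.dvd_of_dvd_mul_right ⟨x2, ?_⟩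
    linear_combination hd'
  have dy' : y2 ∣ y1 := by
    refine c2.symm.dvd_of_dvd_mul_right ⟨x1, ?_⟩
    linear_combination -hd'
  have hx : x1 = x2 ∨ x1 = -x2 := Int.associated_iff.mp (associated_of_dvd_dvd dx dx')
  have hy : y1 = y2 ∨ y1 = -y2 := Int.associated_iff.mp (associated_of_dvd_dvd dy dy')
  rcases hx with hx | hx <;> rcases hy with hy | hy
  · exact hne ⟨hx, hy⟩
  · have h0 : 2 * (x2 * y2) = 0 := by
      subst hx hy; linear_combination hd'
    have h0' : x2 * y2 = 0 := by linarith
    rcases mul_eq_zero.1 h0' with h | h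
    · exact hne' ⟨by omega, by omega⟩
    · exact hne ⟨hx, by omega⟩
  · have h0 : 2 * (x2 * y2) = 0 := by
      subst hx hy; linear_combination -hd'
    have h0' : x2 * y2 = 0 := by linarith
    rcases mul_eq_zero.1 h0' with h | h
    · exact hne' ⟨by omega, by omega⟩
    · exact hne ⟨by omega, hy⟩
  · exact hne' ⟨hx, hy⟩

lemma num_ind : ∀ R : ℕ, 2 ≤ R → ((21:ℝ)/20)^(6*R-3) ≤ 2^(2*R-2) := by
  intro R hR
  induction R, hR using Nat.le_induction with
  | base => norm_num
  | succ n hn ih =>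
      have e1 : 6*(n+1)-3 = (6*n-3) + 6 := by omega
      have e2 : 2*(n+1)-2 = (2*n-2) + 2 := by omega
      rw [e1, e2, pow_add, pow_add]
      have h6 : ((21:ℝ)/20)^6 ≤ 2^2 := by norm_num
      have hp : (0:ℝ) ≤ ((21:ℝ)/20)^(6*n-3) := by positivity
      calc ((21:ℝ)/20)^(6*n-3) * ((21:ℝ)/20)^6
          ≤ 2^(2*n-2) * ((21:ℝ)/20)^6 := by
            exact mul_le_mul_of_nonneg_right ih (by positivity)
        _ ≤ 2^(2*n-2) * 2^2 := by
            exact mul_le_mul_of_nonneg_left h6 (by positivity)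

lemma star3 (r e R : ℕ) (hr : 3 ≤ r) (hR2 : 2 ≤ R) (he : e*(r-2)+1 = R) :
    (Real.pi)^((e+R)*r) ≤ (r:ℝ)^((e+R)*r) * 2^(2*e + r - 3) := by
  rcases Nat.lt_or_ge r 4 with h4 | h4
  · -- r = 3
    have hr3 : r = 3 := by omega
    subst hr3
    have heR : e + 1 = R := by omega
    have hN : (e+R)*3 = 6*R-3 := by omega
    have hE : 2*e + 3 - 3 = 2*R-2 := by omega
    rw [hN, hE]
    have hpi : Real.pi ≤ 3 * (21/20 : ℝ) := by
      have := Real.pi_lt_d2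
      norm_num at this ⊢
      linarith
    calc Real.pi^(6*R-3) ≤ (3 * (21/20 : ℝ))^(6*R-3) := by
          exact pow_le_pow_left₀ Real.pi_nonneg hpi _
      _ = (3:ℝ)^(6*R-3) * ((21:ℝ)/20)^(6*R-3) := by rw [mul_pow]
      _ ≤ (3:ℝ)^(6*R-3) * 2^(2*R-2) := by
          exact mul_le_mul_of_nonneg_left (num_ind R hR2) (by positivity)
      _ = ((3:ℕ):ℝ)^(6*R-3) * 2^(2*R-2) := by norm_num
  · -- r ≥ 4
    have h1 : Real.pi^((e+R)*r) ≤ (r:ℝ)^((e+R)*r) := by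
      apply pow_le_pow_left₀ Real.pi_nonneg
      calc Real.pi ≤ 4 := Real.pi_le_four
        _ ≤ (r:ℝ) := by exact_mod_cast h4
    calc Real.pi^((e+R)*r) ≤ (r:ℝ)^((e+R)*r) := h1
      _ = (r:ℝ)^((e+R)*r) * 1 := by ring
      _ ≤ (r:ℝ)^((e+R)*r) * 2^(2*e + r - 3) := by
          apply mul_le_mul_of_nonneg_left _ (by positivity)
          exact one_le_pow₀ (by norm_num : (1:ℝ) ≤ 2)

set_option maxHeartbeats 1000000 in
lemma final_contra (r h R e : ℕ) (j Z0 Z1 Zn : ℝ)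
    (hr : 3 ≤ r) (hh : 1 ≤ h) (hR2 : 2 ≤ R) (he : e*(r-2)+1 = R)
    (hj0 : 0 ≤ j) (hZ0 : 0 < Z0) (hZ1 : 0 < Z1) (hZn : 0 < Zn)
    (hZ1r : Z1^r ≤ 2*h) (hZnr : Zn^r ≤ 2*h)
    (hbase : r*j ≤ 2*Real.pi*(Z0*Z1))
    (hchain : (r*j)^e * Z0^R ≤ (Real.pi*h)^e * Zn) :
    j ≤ 2^(1 + ((r:ℝ)-2)/((r:ℝ)*((R:ℝ)-1))) * (h:ℝ)^((2:ℝ)/(r:ℝ)) := by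
  have hπ := Real.pi_pos
  have hh0 : (0:ℝ) < h := by exact_mod_cast Nat.lt_of_lt_of_le Nat.zero_lt_one hh
  have hr0 : (0:ℝ) < r := by positivity
  set N : ℕ := (e+R)*r with hNdef
  -- product identities in ℕ
  have her : e*r + 1 = R + 2*e := by
    have heZ : (e:ℤ) * ((r:ℤ) - 2) + 1 = (R:ℤ) := by
      have h' := congrArg (Nat.cast : ℕ → ℤ) he
      push_cast [Nat.cast_sub (show 2 ≤ r by omega)] at h'
      linarith
    have : (e:ℤ)*r + 1 = (R:ℤ) + 2*e := by linear_combination heZ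
    exact_mod_cast this
  -- Step 1
  have S1 : (r*j)^(e+R) ≤ ((Real.pi*h)^e * Zn) * (2*Real.pi*Z1)^R := by
    calc (r*j)^(e+R) = (r*j)^e * (r*j)^R := by rw [pow_add]
      _ ≤ (r*j)^e * (2*Real.pi*(Z0*Z1))^R := by
          exact mul_le_mul_of_nonneg_left (pow_le_pow_left₀ (by positivity) hbase R)
            (by positivity)
      _ = ((r*j)^e * Z0^R) * (2*Real.pi*Z1)^R := by rw [mul_pow, mul_pow]; ring
      _ ≤ ((Real.pi*h)^e * Zn) * (2*Real.pi*Z1)^R := by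
          exact mul_le_mul_of_nonneg_right hchain (by positivity)
  -- Step 2 : raise to the r-th power
  have S2 : (r*j)^N ≤ (Real.pi*h)^(e*r) * (2*Real.pi)^(R*r) * ((Z1^r)^R * Zn^r) := by
    have h2 : ((r*j)^(e+R))^r ≤ (((Real.pi*h)^e * Zn) * (2*Real.pi*Z1)^R)^r :=
      pow_le_pow_left₀ (by positivity) S1 r
    rw [← pow_mul] at h2
    refine h2.trans (le_of_eq ?_)
    simp only [mul_pow]
    rw [pow_mul, pow_mul, pow_right_comm Z1 r R]
    ring
  have S2' : (r*j)^N ≤ (Real.pi*h)^(e*r) * (2*Real.pi)^(R*r) * ((2*h)^R * (2*h)) := by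
    refine S2.trans ?_
    apply mul_le_mul_of_nonneg_left _ (by positivity)
    have h1 : (Z1^r)^R ≤ (2*h)^R := pow_le_pow_left₀ (by positivity) hZ1r R
    exact mul_le_mul h1 hZnr (by positivity) (by positivity)
  -- Step 3 : collect powers
  have S3 : (Real.pi*h)^(e*r) * (2*Real.pi)^(R*r) * ((2*h)^R * (2*h))
      = Real.pi^N * 2^(R*r+R+1) * (h:ℝ)^(2*(e+R)) := by
    have hexp1 : N = e*r + R*r := by rw [hNdef]; ring
    have hexp2 : 2*(e+R) = e*r + R + 1 := by omega
    rw [hexp1, hexp2, mul_pow, mul_pow, mul_pow]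
    ring
  -- Step 4 : apply star3 and collect
  have hNe : N + (r-1) = (2*e + r - 3) + (R*r+R+1) := by
    have hexp1 : N = e*r + R*r := by rw [hNdef]; ring
    omega
  have S4 : (r*j)^N ≤ (r:ℝ)^N * (2^(N + (r-1)) * (h:ℝ)^(2*(e+R))) := by
    calc (r*j)^N ≤ Real.pi^N * 2^(R*r+R+1) * (h:ℝ)^(2*(e+R)) := by
          rw [← S3]; exact S2'
      _ ≤ ((r:ℝ)^N * 2^(2*e + r - 3)) * 2^(R*r+R+1) * (h:ℝ)^(2*(e+R)) := by
          have := star3 r e R hr hR2 he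
          refine mul_le_mul_of_nonneg_right (mul_le_mul_of_nonneg_right ?_ (by positivity))
            (by positivity)
          exact this
      _ = (r:ℝ)^N * (2^(N + (r-1)) * (h:ℝ)^(2*(e+R))) := by
          rw [hNe, pow_add]; ring
  have S5 : j^N ≤ 2^(N + (r-1)) * (h:ℝ)^(2*(e+R)) := by
    have hrN : (0:ℝ) < (r:ℝ)^N := by positivity
    rw [mul_pow] at S4
    exact le_of_mul_le_mul_left (by linarith [S4]) hrN
  -- Step 6 : compare with the target
  set ε : ℝ := ((r:ℝ)-2)/((r:ℝ)*((R:ℝ)-1)) with hεdef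
  set T : ℝ := 2^(1 + ε) * (h:ℝ)^((2:ℝ)/(r:ℝ)) with hTdef
  have hR1 : (1:ℝ) ≤ (R:ℝ) - 1 := by
    have : (2:ℝ) ≤ (R:ℝ) := by exact_mod_cast hR2
    linarith
  have heR : (e:ℝ)*((r:ℝ)-2) = (R:ℝ)-1 := by
    have h' := congrArg (Nat.cast : ℕ → ℝ) he
    push_cast [Nat.cast_sub (show 2 ≤ r by omega)] at h'
    linarith
  have hTN : T^N = (2:ℝ)^(((1:ℝ)+ε)*(N:ℝ)) * (h:ℝ)^(2*(e+R)) := by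
    rw [hTdef, mul_pow]
    congr 1
    · rw [← Real.rpow_natCast ((2:ℝ)^(1+ε)) N, ← Real.rpow_mul (by norm_num)]
    · rw [← Real.rpow_natCast ((h:ℝ)^((2:ℝ)/(r:ℝ))) N, ← Real.rpow_mul (by positivity)]
      rw [show (2:ℝ)/(r:ℝ)*(N:ℝ) = ((2*(e+R) : ℕ):ℝ) by
        push_cast [hNdef]; field_simp]
      rw [Real.rpow_natCast]
  have hexp : ((N:ℝ) + ((r:ℝ) - 1)) ≤ (1+ε)*(N:ℝ) := by
    have hr3 : (3:ℝ) ≤ (r:ℝ) := by exact_mod_cast hr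
    have hNr : (N:ℝ) = ((e:ℝ)+(R:ℝ))*(r:ℝ) := by rw [hNdef]; push_cast; ring
    have h' : ((r:ℝ)-1)*((R:ℝ)-1) ≤ ((r:ℝ)-2)*((e:ℝ)+(R:ℝ)) := by nlinarith [heR]
    have hkey : ((r:ℝ)-1) ≤ ε*(N:ℝ) := by
      rw [hεdef, hNr, div_mul_eq_mul_div, le_div_iff₀ (by positivity)]
      nlinarith [mul_le_mul_of_nonneg_left h' hr0.le]
    nlinarith [hkey]
  have hTge : 2^(N + (r-1)) * (h:ℝ)^(2*(e+R)) ≤ T^N := by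
    rw [hTN]
    apply mul_le_mul_of_nonneg_right _ (by positivity)
    have hcast : ((N + (r-1) : ℕ):ℝ) = (N:ℝ) + ((r:ℝ) - 1) := by
      push_cast [Nat.cast_sub (show 1 ≤ r by omega)]
      ring
    calc (2:ℝ)^(N + (r-1)) = (2:ℝ)^(((N + (r-1) : ℕ)):ℝ) := by
          rw [Real.rpow_natCast]
      _ = (2:ℝ)^((N:ℝ) + ((r:ℝ) - 1)) := by rw [hcast]
      _ ≤ (2:ℝ)^(((1:ℝ)+ε)*(N:ℝ)) := by
          exact (Real.rpow_le_rpow_left_iff (by norm_num)).2 hexp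
  have hjN : j^N ≤ T^N := S5.trans hTge
  have hN0 : N ≠ 0 := by
    have h1 : 0 < N := by rw [hNdef]; exact Nat.mul_pos (by omega) (by omega)
    omega
  exact le_of_pow_le_pow_left₀ hN0 (by positivity) hjN

lemma final_contra_b (r h R : ℕ) (j Z0 Z1 : ℝ)
    (hr : 3 ≤ r) (hh : 1 ≤ h) (hR2 : 2 ≤ R)
    (hj0 : 0 ≤ j) (hZ0 : 0 ≤ Z0) (hZ1 : 0 ≤ Z1)
    (hZ0r : Z0^r ≤ 2*h) (hZ1r : Z1^r ≤ 2*h)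
    (hdet : j ≤ Z0*Z1) :
    j ≤ 2^(1 + ((r:ℝ)-2)/((r:ℝ)*((R:ℝ)-1))) * (h:ℝ)^((2:ℝ)/(r:ℝ)) := by
  have hh0 : (0:ℝ) < h := by exact_mod_cast Nat.lt_of_lt_of_le Nat.zero_lt_one hh
  set ε : ℝ := ((r:ℝ)-2)/((r:ℝ)*((R:ℝ)-1)) with hεdef
  set T : ℝ := 2^(1 + ε) * (h:ℝ)^((2:ℝ)/(r:ℝ)) with hTdef
  have hε0 : 0 ≤ ε := by
    apply div_nonneg
    · have : (3:ℝ) ≤ (r:ℝ) := by exact_mod_cast hr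
      linarith
    · have h1 : (2:ℝ) ≤ (R:ℝ) := by exact_mod_cast hR2
      have h2 : (0:ℝ) < r := by positivity
      nlinarith
  have hjr : j^r ≤ 4 * (h:ℝ)^2 := by
    calc j^r ≤ (Z0*Z1)^r := pow_le_pow_left₀ hj0 hdet r
      _ = Z0^r * Z1^r := by rw [mul_pow]
      _ ≤ (2*h) * (2*h) := by
          exact mul_le_mul hZ0r hZ1r (by positivity) (by positivity)
      _ = 4 * (h:ℝ)^2 := by ring
  have hTr : 4 * (h:ℝ)^2 ≤ T^r := by
    rw [hTdef, mul_pow]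
    have h1 : ((h:ℝ)^((2:ℝ)/(r:ℝ)))^r = (h:ℝ)^2 := by
      rw [← Real.rpow_natCast ((h:ℝ)^((2:ℝ)/(r:ℝ))) r, ← Real.rpow_mul (by positivity)]
      rw [show (2:ℝ)/(r:ℝ)*(r:ℝ) = 2 by field_simp]
      rw [show (2:ℝ) = ((2:ℕ):ℝ) by norm_num, Real.rpow_natCast]
    rw [h1]
    apply mul_le_mul_of_nonneg_right _ (by positivity)
    have h2 : ((2:ℝ)^((1:ℝ)+ε))^r = (2:ℝ)^(((1:ℝ)+ε)*(r:ℝ)) := by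
      rw [← Real.rpow_natCast ((2:ℝ)^((1:ℝ)+ε)) r, ← Real.rpow_mul (by norm_num)]
    rw [h2]
    calc (4:ℝ) ≤ 2^r := by
          calc (4:ℝ) ≤ 2^3 := by norm_num
            _ ≤ 2^r := pow_le_pow_right₀ (by norm_num) hr
      _ = (2:ℝ)^((r:ℕ):ℝ) := by rw [Real.rpow_natCast]
      _ ≤ (2:ℝ)^(((1:ℝ)+ε)*(r:ℝ)) := by
          apply (Real.rpow_le_rpow_left_iff (by norm_num)).2
          have : (0:ℝ) < (r:ℝ) := by positivity
          nlinarith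
  exact le_of_pow_le_pow_left₀ (by omega) (by positivity) (hjr.trans hTr)

/-- argument of a nonzero complex number with real r-th power, lying in (−π/r, π/r] -/
lemma phi_eq (r : ℕ) (hr : 3 ≤ r) (g : ℂ) (hg : g ≠ 0) (him : (g ^ r).im = 0)
    (ha : g.arg ∈ Set.Ioc (-(Real.pi / r)) (Real.pi / r)) :
    g.arg = 0 ∨ g.arg = Real.pi / r := by
  have hπ := Real.pi_pos
  have hr0 : (0:ℝ) < r := by positivity
  set θ := g.arg with hθ
  have hg' : (↑(‖g‖) : ℂ) * exp (θ * I) = g := Complex.norm_mul_exp_arg_mul_I g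
  have hgr : g ^ r = (↑(‖g‖ ^ r) : ℂ) * exp ((((r:ℝ) * θ) : ℝ) * I) := by
    conv_lhs => rw [← hg']
    rw [mul_pow, ← Complex.exp_nat_mul]
    congr 1
    · push_cast; ring
    · congr 1; push_cast; ring
  have hsin : (‖g‖ ^ r) * Real.sin ((r:ℝ) * θ) = 0 := by
    have him' : ((↑(‖g‖ ^ r) : ℂ) * exp ((((r:ℝ) * θ) : ℝ) * I)).im = 0 := by
      rw [← hgr]; exact him
    rw [Complex.mul_im, Complex.ofReal_re, Complex.ofReal_im,
      Complex.exp_ofReal_mul_I_im, Complex.exp_ofReal_mul_I_re] at him'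
    linarith [him']
  have habs : (0:ℝ) < ‖g‖ ^ r := by
    have := norm_pos_iff.mpr hg
    positivity
  have hsin' : Real.sin ((r:ℝ) * θ) = 0 := by
    rcases mul_eq_zero.1 hsin with hcon | hok
    · exact absurd hcon (by linarith)
    · exact hok
  obtain ⟨k, hk⟩ := Real.sin_eq_zero_iff.1 hsin'
  have hlow : -Real.pi < (r:ℝ) * θ := by
    have h1 : -(Real.pi / r) < θ := ha.1
    have h2 := (mul_lt_mul_iff_right₀ hr0).2 h1
    rw [mul_neg, mul_div_cancel₀ _ (ne_of_gt hr0)] at h2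
    linarith
  have hhigh : (r:ℝ) * θ ≤ Real.pi := by
    have h1 : θ ≤ Real.pi / r := ha.2
    have h2 := (mul_le_mul_iff_right₀ hr0).2 h1
    rw [mul_div_cancel₀ _ (ne_of_gt hr0)] at h2
    linarith
  have hk1 : (-1:ℝ) < (k:ℝ) := by
    have hcon : -Real.pi < (k:ℝ) * Real.pi := by rw [hk]; exact hlow
    rw [show -Real.pi = (-1:ℝ)*Real.pi by ring] at hcon
    exact lt_of_mul_lt_mul_right (by linarith [hcon]) (le_of_lt hπ)
  have hk2 : (k:ℝ) ≤ 1 := by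
    have hcon : (k:ℝ) * Real.pi ≤ 1 * Real.pi := by rw [hk]; linarith [hhigh]
    exact le_of_mul_le_mul_right hcon hπ
  have hk01 : k = 0 ∨ k = 1 := by
    have a1 : (-1:ℤ) < k := by exact_mod_cast hk1
    have a2 : (k:ℤ) ≤ 1 := by exact_mod_cast hk2
    omega
  rcases hk01 with h | h
  · left
    have h0 : (r:ℝ) * θ = 0 := by rw [← hk, h]; norm_num
    rcases mul_eq_zero.1 h0 with h' | h'
    · exact absurd h' (ne_of_gt hr0)
    · exact h'
  · right
    have h0 : (r:ℝ) * θ = Real.pi := by rw [← hk, h]; norm_num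
    field_simp
    linarith [h0]

lemma abs_omega (r : ℕ) (hr : 3 ≤ r) (ω : ℂ) (hω : ω ^ r = 1) : ‖ω‖ = 1 := by
  have h1 : ‖ω‖ ^ r = 1 := by
    rw [← norm_pow, hω, norm_one]
  have h0 : 0 ≤ ‖ω‖ := norm_nonneg ω
  rcases lt_trichotomy (‖ω‖) 1 with h | h | h
  · exfalso
    have := pow_lt_one₀ h0 h (by omega : r ≠ 0)
    linarith
  · exact h
  · exfalso
    have := one_lt_pow₀ h (by omega : r ≠ 0)
    linarith

lemma omega_ne (r : ℕ) (hr : 3 ≤ r) (ω : ℂ) (hω : ω ^ r = 1) : ω ≠ 0 := by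
  intro h
  rw [h, zero_pow (by omega : r ≠ 0)] at hω
  exact zero_ne_one hω

/-- Case D>0 pair determinant bound -/
lemma pair_det_b (r : ℕ) (hr : 3 ≤ r) (ω : ℂ) (hω : ω ^ r = 1)
    (u0 v0 u1 v1 : ℂ) (hu0 : u0 ≠ 0) (hv0 : v0 ≠ 0) (hu1 : u1 ≠ 0) (hv1 : v1 ≠ 0)
    (hμ0 : (v0 ^ r / u0 ^ r).im = 0) (hμ1 : (v1 ^ r / u1 ^ r).im = 0)
    (ha0 : (u0 / v0 * ω⁻¹).arg ∈ Set.Ioc (-(Real.pi / r)) (Real.pi / r))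
    (ha1 : (u1 / v1 * ω⁻¹).arg ∈ Set.Ioc (-(Real.pi / r)) (Real.pi / r)) :
    ‖u0 * v1 - u1 * v0‖
      ≤ max (‖u0‖) (‖v0‖) * max (‖u1‖) (‖v1‖) := by
  have hπ := Real.pi_pos
  have hω0 : ω ≠ 0 := omega_ne r hr ω hω
  set g0 : ℂ := u0 / v0 * ω⁻¹ with hg0def
  set g1 : ℂ := u1 / v1 * ω⁻¹ with hg1def
  have hg0 : g0 ≠ 0 := mul_ne_zero (div_ne_zero hu0 hv0) (inv_ne_zero hω0)
  have hg1 : g1 ≠ 0 := mul_ne_zero (div_ne_zero hu1 hv1) (inv_ne_zero hω0)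
  have hgr0 : (g0 ^ r).im = 0 := by
    have h : g0 ^ r = (v0 ^ r / u0 ^ r)⁻¹ := by
      rw [hg0def, mul_pow, div_pow, inv_pow, hω, inv_one, mul_one, inv_div]
    rw [h, Complex.inv_im, hμ0]
    simp
  have hgr1 : (g1 ^ r).im = 0 := by
    have h : g1 ^ r = (v1 ^ r / u1 ^ r)⁻¹ := by
      rw [hg1def, mul_pow, div_pow, inv_pow, hω, inv_one, mul_one, inv_div]
    rw [h, Complex.inv_im, hμ1]
    simp
  have hφ0 := phi_eq r hr g0 hg0 hgr0 ha0
  have hφ1 := phi_eq r hr g1 hg1 hgr1 ha1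
  set φ0 := g0.arg
  set φ1 := g1.arg
  -- cosine bound
  have hcosb : (1:ℝ)/2 ≤ Real.cos (φ0 - φ1) := by
    have hc : Real.cos (Real.pi / r) ≥ 1/2 := by
      have h3 : Real.pi / r ≤ Real.pi / 3 := by
        apply div_le_div_of_nonneg_left (le_of_lt hπ) (by norm_num)
        exact_mod_cast hr
      have h4 : Real.cos (Real.pi / 3) ≤ Real.cos (Real.pi / r) :=
        Real.cos_le_cos_of_nonneg_of_le_pi (by positivity) (by linarith [hπ]) h3
      rw [Real.cos_pi_div_three] at h4
      linarith
    rcases hφ0 with h0 | h0 <;> rcases hφ1 with h1 | h1 <;> rw [h0, h1]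
    · norm_num [Real.cos_zero]
    · rw [zero_sub, Real.cos_neg]; linarith
    · rw [sub_zero]; linarith
    · norm_num [Real.cos_zero]
  -- decompositions
  have hc0 : (↑(‖g0‖) : ℂ) * exp (φ0 * I) = g0 := Complex.norm_mul_exp_arg_mul_I g0
  have hc1 : (↑(‖g1‖) : ℂ) * exp (φ1 * I) = g1 := Complex.norm_mul_exp_arg_mul_I g1
  set c : ℂ := ω * (v0 * v1) with hcdef
  have hp : u0 * v1 = g0 * c := by
    rw [hg0def, hcdef]; field_simp
  have hq : u1 * v0 = g1 * c := by
    rw [hg1def, hcdef]; field_simp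
  set a0 := ‖g0‖ with ha0def
  set a1 := ‖g1‖ with ha1def
  -- the conjugate product
  have hgc : (u0 * v1) * conj (u1 * v0)
      = (↑(a0 * a1 * Complex.normSq c) : ℂ) * exp ((↑(φ0 - φ1) : ℂ) * I) := by
    rw [hp, hq, map_mul]
    have hconj1 : conj g1 = (↑a1 : ℂ) * exp ((↑(-φ1) : ℂ) * I) := by
      rw [← hc1, map_mul, Complex.conj_ofReal, ← Complex.exp_conj]
      congr 1
      rw [map_mul, Complex.conj_ofReal, Complex.conj_I]
      push_cast
      ring
    calc g0 * c * (conj g1 * conj c)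
        = (g0 * conj g1) * (c * conj c) := by ring
      _ = ((↑a0 : ℂ) * exp (φ0 * I) * ((↑a1 : ℂ) * exp ((↑(-φ1) : ℂ) * I)))
            * (↑(Complex.normSq c) : ℂ) := by rw [hc0, ← hconj1, Complex.mul_conj]
      _ = (↑(a0 * a1 * Complex.normSq c) : ℂ) * (exp (φ0 * I) * exp ((↑(-φ1) : ℂ) * I)) := by
            push_cast; ring
      _ = (↑(a0 * a1 * Complex.normSq c) : ℂ) * exp ((↑(φ0 - φ1) : ℂ) * I) := by
            rw [← Complex.exp_add]
            congr 1
            push_cast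
            ring
  have hre : ((u0 * v1) * conj (u1 * v0)).re
      = (a0 * a1 * Complex.normSq c) * Real.cos (φ0 - φ1) := by
    rw [hgc, Complex.mul_re, Complex.ofReal_re, Complex.ofReal_im]
    have h1 : (exp ((↑(φ0 - φ1) : ℂ) * I)).re = Real.cos (φ0 - φ1) :=
      Complex.exp_ofReal_mul_I_re _
    rw [h1]
    ring
  -- absolute values
  have hap : ‖u0 * v1‖ = a0 * ‖c‖ := by
    rw [hp, norm_mul]
  have haq : ‖u1 * v0‖ = a1 * ‖c‖ := by
    rw [hq, norm_mul]
  have hnsc : Complex.normSq c = ‖c‖ ^ 2 := (Complex.sq_norm c).symm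
  have hre' : ‖u0 * v1‖ * ‖u1 * v0‖ * (1/2)
      ≤ ((u0 * v1) * conj (u1 * v0)).re := by
    rw [hre, hap, haq, hnsc]
    have hnn : 0 ≤ a0 * ‖c‖ * (a1 * ‖c‖) := by positivity
    nlinarith [hnn, hcosb]
  -- norms bound
  set M := max (‖u0‖) (‖v0‖) * max (‖u1‖) (‖v1‖) with hM
  have hM0 : 0 ≤ M := by positivity
  have hapM : ‖u0 * v1‖ ≤ M := by
    rw [norm_mul, hM]
    exact mul_le_mul (le_max_left _ _) (le_max_right _ _) (norm_nonneg _)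
      (le_trans (norm_nonneg _) (le_max_left _ _))
  have haqM : ‖u1 * v0‖ ≤ M := by
    rw [norm_mul, hM, mul_comm (‖u1‖) (‖v0‖)]
    exact mul_le_mul (le_max_right _ _) (le_max_left _ _) (norm_nonneg _)
      (le_trans (norm_nonneg _) (le_max_left _ _))
  -- assemble
  have hsq : ‖u0 * v1 - u1 * v0‖ ^ 2 ≤ M ^ 2 := by
    rw [Complex.sq_norm, Complex.normSq_sub]
    rw [Complex.normSq_eq_norm_sq, Complex.normSq_eq_norm_sq]
    set ap := ‖u0 * v1‖
    set aq := ‖u1 * v0‖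
    have hap0 : 0 ≤ ap := norm_nonneg _
    have haq0 : 0 ≤ aq := norm_nonneg _
    rcases le_total ap aq with hle | hle
    · nlinarith [hre', hapM, haqM]
    · nlinarith [hre', hapM, haqM]
  exact le_of_pow_le_pow_left₀ two_ne_zero hM0 hsq

/-- exponent sequence for the gap iteration -/
def EE (s : ℕ) : ℕ → ℕ
  | 0 => 0
  | (k+1) => 1 + s * EE s k

lemma EE_rel (s : ℕ) (hs : 2 ≤ s) (k : ℕ) : EE s k * (s - 1) + 1 = s ^ k := by
  obtain ⟨m, rfl⟩ : ∃ m, s = m + 2 := ⟨s - 2, by omega⟩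
  induction k with
  | zero => simp [EE]
  | succ k ih =>
      show (1 + (m+2) * EE (m+2) k) * (m + 2 - 1) + 1 = (m+2)^(k+1)
      have h1 : (1 + (m+2) * EE (m+2) k) * (m + 2 - 1) + 1
          = (m+2) * (EE (m+2) k * (m + 2 - 1) + 1) := by
        show (1 + (m+2) * EE (m+2) k) * (m + 1) + 1 = (m+2) * (EE (m+2) k * (m + 1) + 1)
        ring
      rw [h1, ih, ← pow_succ']

lemma chain_pow (r m : ℕ) (hr : 3 ≤ r) (a b : ℝ) (Z : ℕ → ℝ)
    (ha : 0 ≤ a) (hb : 0 ≤ b) (hZ0 : 0 ≤ Z 0)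
    (hstep : ∀ k, k + 1 ≤ m → a * Z k ^ (r-1) ≤ b * Z (k+1)) :
    ∀ k, k ≤ m → a ^ (EE (r-1) k) * Z 0 ^ ((r-1)^k) ≤ b ^ (EE (r-1) k) * Z k := by
  intro k
  induction k with
  | zero => intro _; simp [EE]
  | succ k ih =>
      intro hk1
      have hk : k ≤ m := by omega
      have IH := ih hk
      have e1 : EE (r-1) (k+1) = 1 + (r-1) * EE (r-1) k := rfl
      have e2 : (r-1)^(k+1) = ((r-1)^k) * (r-1) := by rw [pow_succ]
      calc a ^ (EE (r-1) (k+1)) * Z 0 ^ ((r-1)^(k+1))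
          = a * ((a ^ (EE (r-1) k) * Z 0 ^ ((r-1)^k)) ^ (r-1)) := by
            rw [e1, e2, pow_add, pow_one, mul_pow, pow_mul, pow_right_comm a,
              pow_mul (Z 0)]
            ring
        _ ≤ a * ((b ^ (EE (r-1) k) * Z k) ^ (r-1)) := by
            exact mul_le_mul_of_nonneg_left (pow_le_pow_left₀ (by positivity) IH _) ha
        _ = (b ^ (EE (r-1) k)) ^ (r-1) * (a * Z k ^ (r-1)) := by
            rw [mul_pow]; ring
        _ ≤ (b ^ (EE (r-1) k)) ^ (r-1) * (b * Z (k+1)) := by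
            exact mul_le_mul_of_nonneg_left (hstep k hk1) (by positivity)
        _ = b ^ (EE (r-1) (k+1)) * Z (k+1) := by
            rw [e1, pow_add, pow_one, mul_comm (r-1) (EE (r-1) k), pow_mul b]
            ring

set_option maxHeartbeats 1000000 in
/-- Let `r ≥ 3`, `t ≥ 3`, and let `(x_1,y_1), …, (x_t,y_t)` be primitive
solutions of `0 < |F| ≤ h`, pairwise distinct up to sign, all related to the same `r`-th
root of unity `ω`, ordered so that `ζ_1 ≥ ζ_2 ≥ … ≥ ζ_t`. Assume either (a) `γ = conj α`
and `δ = conj β` (`D < 0`), or (b) `u_i, v_i ≠ 0` and `μ_i` real for all `i` (`D > 0`).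
If `|j| > 2^{1+(r−2)/(r(R−1))}·h^{2/r}` where `R = (r−1)^{t−2}`, then `ζ_{t−1} < 1/2`. -/
theorem iteration_zeta_small (r h t : ℕ) (hr : 3 ≤ r) (hh : 1 ≤ h) (ht : 3 ≤ t)
    (α β γ δ j : ℂ) (hj : j = α * δ - β * γ) (hj0 : j ≠ 0) (hint : IntCoeffs α β γ δ r)
    (sol : Fin t → ℤ × ℤ)
    (hsol : ∀ i, IsPrimSol α β γ δ r h (sol i).1 (sol i).2)
    (hdist : ∀ i k : Fin t, i ≠ k →
      sol i ≠ sol k ∧ sol i ≠ (-(sol k).1, -(sol k).2))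
    (ω : ℂ) (hω : ω ^ r = 1)
    (hrel : ∀ i, RelatedTo α β γ δ r ω (sol i).1 (sol i).2)
    (hord : ∀ i k : Fin t, i ≤ k →
      zetaF α β γ δ r (sol k).1 (sol k).2 ≤ zetaF α β γ δ r (sol i).1 (sol i).2)
    (hcase : (γ = (starRingEnd ℂ) α ∧ δ = (starRingEnd ℂ) β) ∨
      (∀ i, lin α β (sol i).1 (sol i).2 ≠ 0 ∧ lin γ δ (sol i).1 (sol i).2 ≠ 0 ∧
        (muF α β γ δ r (sol i).1 (sol i).2).im = 0))
    (R : ℕ) (hR : R = (r - 1) ^ (t - 2))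
    (hjbig : (2 : ℝ) ^ (1 + ((r : ℝ) - 2) / ((r : ℝ) * ((R : ℝ) - 1))) *
        (h : ℝ) ^ ((2 : ℝ) / r) < ‖j‖) :
    zetaF α β γ δ r (sol ⟨t - 2, by omega⟩).1 (sol ⟨t - 2, by omega⟩).2 < 1 / 2 := by
  by_contra hcon
  push_neg at hcon
  have hπ := Real.pi_pos
  have hr0 : (0:ℝ) < r := by positivity
  have hω0 : ω ≠ 0 := omega_ne r hr ω hω
  have hωabs : ‖ω‖ = 1 := abs_omega r hr ω hω
  set n := t - 2 with hn
  have hidxlt : ∀ k : ℕ, min k (t-1) < t := fun k => by omega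
  set idx : ℕ → Fin t := fun k => ⟨min k (t-1), hidxlt k⟩ with hidxdef
  have hidxval : ∀ k, k ≤ n → ((idx k : Fin t) : ℕ) = k := by
    intro k hk
    simp only [hidxdef]
    omega
  set u : ℕ → ℂ := fun k => lin α β (sol (idx k)).1 (sol (idx k)).2 with hu
  set v : ℕ → ℂ := fun k => lin γ δ (sol (idx k)).1 (sol (idx k)).2 with hv
  set Z : ℕ → ℝ := fun k => Zmax α β γ δ (sol (idx k)).1 (sol (idx k)).2 with hZ
  set ζ : ℕ → ℝ := fun k => zetaF α β γ δ r (sol (idx k)).1 (sol (idx k)).2 with hζ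
  set F : ℕ → ℂ := fun k => form α β γ δ r (sol (idx k)).1 (sol (idx k)).2 with hF
  have hZdef : ∀ k, Z k = max (‖u k‖) (‖v k‖) := fun k => rfl
  have hζdef : ∀ k, ζ k = ‖F k‖ / Z k ^ r := fun k => rfl
  have hFdef : ∀ k, F k = u k ^ r - v k ^ r := fun k => rfl
  have hFpos : ∀ k, 0 < ‖F k‖ := fun k => (hsol (idx k)).2.1
  have hFh : ∀ k, ‖F k‖ ≤ (h:ℝ) := fun k => (hsol (idx k)).2.2
  have hζn : 1/2 ≤ ζ n := by
    have heq : idx n = (⟨t - 2, by omega⟩ : Fin t) := by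
      apply Fin.ext
      simp only [hidxdef]
      omega
    show (1:ℝ)/2 ≤ zetaF α β γ δ r (sol (idx n)).1 (sol (idx n)).2
    rw [heq]
    exact hcon
  have hord' : ∀ k l, k ≤ l → l ≤ n → ζ l ≤ ζ k := by
    intro k l hkl hln
    exact hord (idx k) (idx l) (by simp only [hidxdef, Fin.mk_le_mk]; omega)
  have hζhalf : ∀ k, k ≤ n → 1/2 ≤ ζ k := fun k hk => le_trans hζn (hord' k n hk le_rfl)
  have hZr_ne : ∀ k, k ≤ n → Z k ^ r ≠ 0 := by
    intro k hk h0
    have h1 := hζhalf k hk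
    rw [hζdef k, h0, div_zero] at h1
    linarith
  have hZnonneg : ∀ k, 0 ≤ Z k := fun k => le_trans (norm_nonneg _) (le_max_left _ _)
  have hZpos : ∀ k, k ≤ n → 0 < Z k := by
    intro k hk
    have hne : Z k ≠ 0 := fun h0 => hZr_ne k hk (by rw [h0]; exact zero_pow (by omega))
    exact lt_of_le_of_ne (hZnonneg k) (Ne.symm hne)
  have hζZF : ∀ k, k ≤ n → ζ k * Z k ^ r = ‖F k‖ := by
    intro k hk
    rw [hζdef]
    exact div_mul_cancel₀ _ (hZr_ne k hk)
  have hZ2h : ∀ k, k ≤ n → Z k ^ r ≤ 2 * h := by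
    intro k hk
    have h1 := hζhalf k hk
    have h2 := hζZF k hk
    have h3 := hFh k
    have h4 : (1/2) * Z k ^ r ≤ ζ k * Z k ^ r :=
      mul_le_mul_of_nonneg_right h1 (pow_nonneg (hZnonneg k) r)
    linarith
  have hdetlow : ∀ k l, k ≤ n → l ≤ n → k ≠ l →
      ‖j‖ ≤ ‖u k * v l - u l * v k‖ := by
    intro k l hk hl hkl
    have hne : idx k ≠ idx l := by
      intro hcontra
      have h1 := congrArg Fin.val hcontra
      rw [hidxval k hk, hidxval l hl] at h1
      exact hkl h1
    obtain ⟨hd1, hd2⟩ := hdist (idx k) (idx l) hne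
    set d : ℤ := (sol (idx k)).1 * (sol (idx l)).2 - (sol (idx l)).1 * (sol (idx k)).2 with hd
    have hdint : d ≠ 0 := by
      apply det_ne_zero_of_prim (hsol (idx k)).1 (hsol (idx l)).1
      · rintro ⟨h1', h2'⟩
        exact hd1 (Prod.ext h1' h2')
      · rintro ⟨h1', h2'⟩
        exact hd2 (Prod.ext h1' h2')
    have hiden : u k * v l - u l * v k = j * ((d : ℤ) : ℂ) := by
      simp only [hu, hv, hd, lin, hj]
      push_cast
      ring
    rw [hiden, norm_mul]
    have h1 : (1:ℝ) ≤ ‖((d : ℤ) : ℂ)‖ := by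
      have he1 : ((d:ℤ):ℂ) = (((d:ℤ):ℝ):ℂ) := by push_cast; ring
      rw [he1, Complex.norm_real, Real.norm_eq_abs]
      have h2 : (1:ℤ) ≤ |d| := Int.one_le_abs hdint
      have h3 : |(d:ℝ)| = ((|d| : ℤ) : ℝ) := by push_cast; ring
      rw [h3]
      exact_mod_cast h2
    calc ‖j‖ = ‖j‖ * 1 := by ring
      _ ≤ ‖j‖ * ‖((d:ℤ):ℂ)‖ :=
          mul_le_mul_of_nonneg_left h1 (norm_nonneg j)
  rcases hcase with ⟨hγ, hδ⟩ | hb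
  · -- case (a) : D < 0
    have hvu : ∀ k, v k = conj (u k) := by
      intro k
      show lin γ δ _ _ = conj (lin α β _ _)
      simp only [lin, hγ, hδ]
      rw [map_add, map_mul, map_mul, map_intCast, map_intCast]
    have hZu : ∀ k, Z k = ‖u k‖ := by
      intro k
      rw [hZdef, hvu, Complex.norm_conj, max_self]
    have hZv : ∀ k, Z k = ‖v k‖ := by
      intro k
      rw [hvu, Complex.norm_conj, ← hZu]
    have hu0 : ∀ k, k ≤ n → u k ≠ 0 := by
      intro k hk h0
      have h1 := hZpos k hk
      rw [hZu, h0, norm_zero] at h1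
      exact lt_irrefl _ h1
    have hv0 : ∀ k, k ≤ n → v k ≠ 0 := by
      intro k hk h0
      apply hu0 k hk
      rw [hvu] at h0
      have := congrArg conj h0
      simpa using this
    set φ : ℕ → ℝ := fun k => (u k / v k * ω⁻¹).arg with hφdef
    have hφIoc : ∀ k, φ k ∈ Set.Ioc (-(Real.pi/r)) (Real.pi/r) := fun k => hrel (idx k)
    have hφabs : ∀ k, |φ k| ≤ Real.pi / r := by
      intro k
      obtain ⟨h1, h2⟩ := hφIoc k
      rw [abs_le]
      exact ⟨le_of_lt h1, h2⟩
    have hgk : ∀ k, k ≤ n → u k / v k * ω⁻¹ = exp (φ k * I) := by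
      intro k hk
      have habs1 : ‖u k / v k * ω⁻¹‖ = 1 := by
        rw [norm_mul, norm_div, hvu, Complex.norm_conj, norm_inv, hωabs,
          div_self (norm_ne_zero_iff.mpr (hu0 k hk))]
        norm_num
      have h1 := Complex.norm_mul_exp_arg_mul_I (u k / v k * ω⁻¹)
      rw [habs1] at h1
      simpa using h1.symm
    have huv : ∀ k, k ≤ n → u k = exp (φ k * I) * ω * v k := by
      intro k hk
      have h1 := hgk k hk
      have h2 : u k / v k * ω⁻¹ * (ω * v k) = u k := by
        field_simp [hv0 k hk, hω0]
      rw [← h2, h1]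
      ring
    have hζk : ∀ k, k ≤ n → ζ k = ‖exp ((((r:ℝ) * φ k) : ℝ) * I) - 1‖ := by
      intro k hk
      have hEr : exp (φ k * I) ^ r = exp ((((r:ℝ) * φ k) : ℝ) * I) := by
        rw [← Complex.exp_nat_mul]
        congr 1
        push_cast
        ring
      have hFk : F k = (exp ((((r:ℝ) * φ k) : ℝ) * I) - 1) * v k ^ r := by
        rw [hFdef, huv k hk, mul_pow, mul_pow, hω, hEr]
        ring
      rw [hζdef, hFk, norm_mul, norm_pow, ← hZv]
      rw [mul_div_assoc, div_self (hZr_ne k hk), mul_one]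
    have hsingle : ∀ k, k ≤ n → 2 * r * |φ k| ≤ Real.pi * ζ k := by
      intro k hk
      have habs : |(r:ℝ) * φ k| ≤ Real.pi := by
        rw [abs_mul, _root_.abs_of_nonneg (le_of_lt hr0)]
        calc (r:ℝ) * |φ k| ≤ (r:ℝ) * (Real.pi / r) :=
              mul_le_mul_of_nonneg_left (hφabs k) (le_of_lt hr0)
          _ = Real.pi := by field_simp
      have hjord := jordan_lower ((r:ℝ) * φ k) habs
      rw [← hζk k hk, abs_mul, _root_.abs_of_nonneg (le_of_lt hr0)] at hjord
      calc 2 * r * |φ k| = Real.pi * (2 / Real.pi * ((r:ℝ) * |φ k|)) := by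
            field_simp
        _ ≤ Real.pi * ζ k := mul_le_mul_of_nonneg_left hjord (le_of_lt hπ)
    have hpair : ∀ k l, k ≤ n → l ≤ n → k ≠ l →
        ‖j‖ ≤ Z k * Z l * (|φ k| + |φ l|) := by
      intro k l hk hl hkl
      have h1 := hdetlow k l hk hl hkl
      have hID : u k * v l - u l * v k
          = (exp (φ k * I) - exp (φ l * I)) * ω * (v k * v l) := by
        conv_lhs => rw [huv k hk, huv l hl]
        ring
      rw [hID, norm_mul, norm_mul, norm_mul, hωabs, mul_one] at h1
      have h2 : ‖exp (φ k * I) - exp (φ l * I)‖ ≤ |φ k| + |φ l| :=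
        le_trans (chord_le _ _) (abs_sub _ _)
      calc ‖j‖
          ≤ ‖exp (φ k * I) - exp (φ l * I)‖ * (‖v k‖ * ‖v l‖) := h1
        _ = (‖v k‖ * ‖v l‖) * ‖exp (φ k * I) - exp (φ l * I)‖ := by ring
        _ ≤ (‖v k‖ * ‖v l‖) * (|φ k| + |φ l|) := by
            apply mul_le_mul_of_nonneg_left h2
            positivity
        _ = Z k * Z l * (|φ k| + |φ l|) := by rw [← hZv, ← hZv]
    have hstep : ∀ k, k + 1 ≤ n →
        ((r:ℝ) * ‖j‖) * Z k ^ (r - 1) ≤ (Real.pi * h) * Z (k+1) := by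
      intro k hk1
      have hk : k ≤ n := by omega
      have hp := hpair k (k+1) hk hk1 (by omega)
      have hs1 := hsingle k hk
      have hs2 := hsingle (k+1) hk1
      have hζord : ζ (k+1) ≤ ζ k := hord' k (k+1) (by omega) hk1
      have hrS : (r:ℝ) * (|φ k| + |φ (k+1)|) ≤ Real.pi * ζ k := by
        have h5 : Real.pi * ζ (k+1) ≤ Real.pi * ζ k :=
          mul_le_mul_of_nonneg_left hζord (le_of_lt hπ)
        linarith
      have hA1 : (r:ℝ) * ‖j‖ ≤ Z k * Z (k+1) * (Real.pi * ζ k) := by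
        calc (r:ℝ) * ‖j‖
            ≤ (r:ℝ) * (Z k * Z (k+1) * (|φ k| + |φ (k+1)|)) :=
              mul_le_mul_of_nonneg_left hp (le_of_lt hr0)
          _ = Z k * Z (k+1) * ((r:ℝ) * (|φ k| + |φ (k+1)|)) := by ring
          _ ≤ Z k * Z (k+1) * (Real.pi * ζ k) := by
              apply mul_le_mul_of_nonneg_left hrS
              exact mul_nonneg (hZnonneg k) (hZnonneg (k+1))
      have hpow : Z k ^ (r-1) * Z k = Z k ^ r := by
        rw [← pow_succ]
        congr 1
        omega
      calc ((r:ℝ) * ‖j‖) * Z k ^ (r-1)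
          ≤ (Z k * Z (k+1) * (Real.pi * ζ k)) * Z k ^ (r-1) :=
            mul_le_mul_of_nonneg_right hA1 (pow_nonneg (hZnonneg k) _)
        _ = (ζ k * (Z k ^ (r-1) * Z k)) * (Real.pi * Z (k+1)) := by ring
        _ = (ζ k * Z k ^ r) * (Real.pi * Z (k+1)) := by rw [hpow]
        _ = ‖F k‖ * (Real.pi * Z (k+1)) := by rw [hζZF k hk]
        _ ≤ (h:ℝ) * (Real.pi * Z (k+1)) := by
            apply mul_le_mul_of_nonneg_right (hFh k)
            exact mul_nonneg (le_of_lt hπ) (hZnonneg (k+1))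
        _ = (Real.pi * h) * Z (k+1) := by ring
    have hbase : (r:ℝ) * ‖j‖ ≤ 2 * Real.pi * (Z 0 * Z 1) := by
      have h1n : 1 ≤ n := by omega
      have hp := hpair 0 1 (by omega) h1n (by omega)
      have h4 : (r:ℝ) * (|φ 0| + |φ 1|) ≤ 2 * Real.pi := by
        have e0 : (r:ℝ) * (Real.pi / r) = Real.pi := by field_simp
        have h5 := hφabs 0
        have h6 := hφabs 1
        nlinarith [h5, h6, hr0]
      calc (r:ℝ) * ‖j‖
          ≤ (r:ℝ) * (Z 0 * Z 1 * (|φ 0| + |φ 1|)) :=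
            mul_le_mul_of_nonneg_left hp (le_of_lt hr0)
        _ = (Z 0 * Z 1) * ((r:ℝ) * (|φ 0| + |φ 1|)) := by ring
        _ ≤ (Z 0 * Z 1) * (2 * Real.pi) := by
            apply mul_le_mul_of_nonneg_left h4
            exact mul_nonneg (hZnonneg 0) (hZnonneg 1)
        _ = 2 * Real.pi * (Z 0 * Z 1) := by ring
    have hchain := chain_pow r n hr ((r:ℝ) * ‖j‖) (Real.pi * h) Z
      (by positivity) (by positivity) (hZnonneg 0) hstep n le_rfl
    have hRn : R = (r-1)^n := hR
    have heE : EE (r-1) n * (r - 2) + 1 = R := by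
      have h1 := EE_rel (r-1) (by omega) n
      rw [hRn]
      have h2 : r - 1 - 1 = r - 2 := by omega
      rw [h2] at h1
      exact h1
    have hR2 : 2 ≤ R := by
      rw [hRn]
      calc 2 ≤ r - 1 := by omega
        _ = (r-1)^1 := by rw [pow_one]
        _ ≤ (r-1)^n := Nat.pow_le_pow_right (by omega) (by omega)
    have hchain' : ((r:ℝ) * ‖j‖) ^ (EE (r-1) n) * Z 0 ^ R
        ≤ (Real.pi * h) ^ (EE (r-1) n) * Z n := by
      rw [hRn]
      exact hchain
    have hfin := final_contra r h R (EE (r-1) n) (‖j‖) (Z 0) (Z 1) (Z n)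
      hr hh hR2 heE (norm_nonneg j) (hZpos 0 (by omega)) (hZpos 1 (by omega))
      (hZpos n le_rfl) (hZ2h 1 (by omega)) (hZ2h n le_rfl) hbase hchain'
    exact absurd hjbig (not_lt.2 hfin)
  · -- case (b) : D > 0
    have h1n : 1 ≤ n := by omega
    have hd := hdetlow 0 1 (by omega) h1n (by omega)
    have hμ0 : (v 0 ^ r / u 0 ^ r).im = 0 := (hb (idx 0)).2.2
    have hμ1 : (v 1 ^ r / u 1 ^ r).im = 0 := (hb (idx 1)).2.2
    have hpb := pair_det_b r hr ω hω (u 0) (v 0) (u 1) (v 1)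
      (hb (idx 0)).1 (hb (idx 0)).2.1 (hb (idx 1)).1 (hb (idx 1)).2.1
      hμ0 hμ1 (hrel (idx 0)) (hrel (idx 1))
    have hR2 : 2 ≤ R := by
      rw [hR]
      calc 2 ≤ r - 1 := by omega
        _ = (r-1)^1 := by rw [pow_one]
        _ ≤ (r-1)^(t-2) := Nat.pow_le_pow_right (by omega) (by omega)
    have hfin := final_contra_b r h R (‖j‖) (Z 0) (Z 1)
      hr hh hR2 (norm_nonneg j) (hZnonneg 0) (hZnonneg 1)
      (hZ2h 0 (by omega)) (hZ2h 1 (by omega)) (le_trans hd hpb)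
    exact absurd hjbig (not_lt.2 hfin)
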